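/- Let K be a set of k positive integers and let D be a simple digraph (no loops or parallel arcs) in which every directed cycle has length belonging to K. Then D is k-degenerate, i.e., every subdigraph of D (including D itself) contains a vertex whose indegree or outdegree in that subdigraph is at most k. -/

import Mathlib

/-- A directed cycle of length `n` in the digraph with arc relation `A`:
an injective map `f : ZMod n → V` with an arc from each vertex to the next. -/
def IsDicycle {V : Type*} (A : V → V → Prop) (n : ℕ) (f : ZMod n → V) : Prop :=
  0 < n ∧ Function.Injective f ∧ ∀ i, A (f i) (f (i + 1))

/-- A set of vertices is acyclic if it contains no directed cycle. -/
def AcyclicSet {V : Type*} (A : V → V → Prop) (S : Set V) : Prop :=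
  ∀ (n : ℕ) (f : ZMod n → V), (∀ i, f i ∈ S) → ¬ IsDicycle A n f

/-- The dichromatic number: least `k` such that the vertices can be colored with `k`
colors with every color class acyclic. -/
noncomputable def dichromatic {V : Type*} (A : V → V → Prop) : ℕ :=
  sInf {k | ∃ c : V → Fin k, ∀ i, AcyclicSet A (c ⁻¹' {i})}

/-- The maximum size of an acyclic set of vertices. -/
noncomputable def maxAcyclic {V : Type*} [Fintype V] (A : V → V → Prop) : ℕ :=
  sSup {k | ∃ S : Finset V, AcyclicSet A ↑S ∧ S.card = k}

/-- If `D` is a simple digraph in which every directed cycle has length in a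
set `K` of `k` positive integers, then `D` is `k`-degenerate: every (nonempty) subdigraph
has a vertex of indegree or outdegree at most `k` in that subdigraph. -/
theorem stmt0 {V : Type*} [Fintype V] [DecidableEq V] (A : V → V → Prop) [DecidableRel A]
    (hirr : Irreflexive A) (K : Finset ℕ) (hKpos : ∀ m ∈ K, 0 < m)
    (hcyc : ∀ (n : ℕ) (f : ZMod n → V), IsDicycle A n f → n ∈ K)
    (S : Finset V) (hS : S.Nonempty) :
    ∃ v ∈ S, (S.filter (fun u => A u v)).card ≤ K.card ∨
      (S.filter (fun u => A v u)).card ≤ K.card := by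
  by_contra hcon
  push_neg at hcon
  -- Good paths: nodup lists in S forming a chain of arcs
  set P : List V → Prop := fun l => l.Nodup ∧ (∀ x ∈ l, x ∈ S) ∧ List.Chain' A l with hP
  have hbdd : ∀ l, P l → l.length ≤ S.card := by
    intro l ⟨h1, h2, _⟩
    rw [← List.toFinset_card_of_nodup h1]
    exact Finset.card_le_card (fun x hx => h2 x (List.mem_toFinset.mp hx))
  obtain ⟨v0, hv0⟩ := hS
  have hPv0 : P [v0] := ⟨List.nodup_singleton v0, by simpa using hv0, List.isChain_singleton v0⟩
  set T : Set ℕ := {n | ∃ l, P l ∧ l.length = n} with hT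
  have hTne : T.Nonempty := ⟨1, [v0], hPv0, rfl⟩
  have hTbdd : BddAbove T := ⟨S.card, fun n ⟨l, hl, hln⟩ => hln ▸ hbdd l hl⟩
  obtain ⟨l, hl, hlen⟩ := Nat.sSup_mem hTne hTbdd
  have hmax : ∀ l', P l' → l'.length ≤ l.length := fun l' hl' =>
    hlen ▸ le_csSup hTbdd ⟨l', hl', rfl⟩
  have hlpos : 0 < l.length := by
    have : (1 : ℕ) ≤ sSup T := le_csSup hTbdd ⟨[v0], hPv0, rfl⟩
    omega
  obtain ⟨hnd, hmem, hch⟩ := hl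
  have hlne : l ≠ [] := List.ne_nil_of_length_pos hlpos
  set v : V := l.getLast hlne with hv
  have hvmem : v ∈ l := List.getLast_mem hlne
  have hvS : v ∈ S := hmem v hvmem
  set N : Finset V := S.filter (fun u => A v u) with hN
  have hNcard : K.card < N.card := (hcon v hvS).2
  -- every out-neighbor of v lies on l
  have hsub : ∀ u ∈ N, u ∈ l := by
    intro u hu
    by_contra hul
    have huS : u ∈ S := (Finset.mem_filter.mp hu).1
    have hAvu : A v u := (Finset.mem_filter.mp hu).2
    have hP' : P (l ++ [u]) := by
      refine ⟨?_, ?_, ?_⟩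
      · rw [List.nodup_append']
        exact ⟨hnd, List.nodup_singleton u, by simpa using fun h => hul h⟩
      · intro x hx
        rcases List.mem_append.mp hx with h | h
        · exact hmem x h
        · simpa using (List.mem_singleton.mp h) ▸ huS
      · show List.IsChain A (l ++ [u])
        rw [List.isChain_append]
        refine ⟨hch, List.isChain_singleton u, ?_⟩
        intro x hx y hy
        simp only [List.head?_cons, Option.mem_def, Option.some.injEq] at hy
        rw [List.getLast?_eq_getLast hlne, Option.mem_def, Option.some.injEq] at hx
        rw [← hx, ← hy]
        exact hAvu
    have := hmax _ hP'
    simp at this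
  -- index of the last vertex
  have hidx : ∀ u ∈ l, l.idxOf u < l.length := fun u hu => List.idxOf_lt_length_iff.mpr hu
  have hget : ∀ u (hu : u ∈ l), l.get ⟨l.idxOf u, hidx u hu⟩ = u := fun u hu =>
    List.getElem_idxOf (hidx u hu)
  have hvlast : l.get ⟨l.length - 1, by omega⟩ = v := (List.getLast_eq_getElem hlne).symm
  -- cycle length map
  set g : V → ℕ := fun u => l.length - l.idxOf u with hg
  have hgK : ∀ u ∈ N, g u ∈ K := by
    intro u hu
    have hul : u ∈ l := hsub u hu
    have hAvu : A v u := (Finset.mem_filter.mp hu).2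
    have hune : u ≠ v := fun h => hirr v (h ▸ hAvu)
    set i : ℕ := l.idxOf u with hi
    have hiL : i < l.length := hidx u hul
    have hine : i ≠ l.length - 1 := by
      intro h
      apply hune
      rw [← hget u hul, ← hvlast]
      congr 1
      exact Fin.ext h
    set n : ℕ := l.length - i with hn
    have hn2 : 2 ≤ n := by omega
    haveI : NeZero n := ⟨by omega⟩
    have hjlt : ∀ j : ZMod n, i + j.val < l.length := by
      intro j
      have := ZMod.val_lt j
      omega
    set f : ZMod n → V := fun j => l.get ⟨i + j.val, hjlt j⟩ with hf
    haveI : Fact (1 < n) := ⟨by omega⟩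
    have hone : (1 : ZMod n).val = 1 := ZMod.val_one n
    have hdi : IsDicycle A n f := by
      refine ⟨by omega, ?_, ?_⟩
      · intro j1 j2 hj
        have := List.nodup_iff_injective_get.mp hnd hj
        have hv : i + j1.val = i + j2.val := congrArg Fin.val this
        exact ZMod.val_injective n (by omega)
      · intro j
        rcases Nat.lt_or_ge (j.val + 1) n with hlt | hge
        · have hval : (j + 1).val = j.val + 1 := by
            rw [ZMod.val_add_of_lt (by omega)]; omega
          have harc := List.isChain_iff_getElem.mp hch (i + j.val) (by omega)
          simp only [hf, hval]
          convert harc using 2 <;> rfl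
        · have hje : j.val = n - 1 := by have := ZMod.val_lt j; omega
          have hval : (j + 1).val = 0 := by
            have : (j + 1).val = (j.val + (1 : ZMod n).val) % n := ZMod.val_add j 1
            rw [this, hone, hje]
            simp [Nat.sub_add_cancel (by omega : 1 ≤ n)]
          have h1 : f j = v := by
            simp only [hf, hje]
            rw [← hvlast]
            congr 1 <;> simp only [Fin.mk.injEq] <;> omega
          have h2 : f (j + 1) = u := by
            simp only [hf, hval]
            rw [← hget u hul]
            congr 1 <;> simp only [Fin.mk.injEq] <;> omega
          rw [h1, h2]
          exact hAvu
    exact hcyc n f hdi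
  have hginj : Set.InjOn g ↑N := by
    intro u1 h1 u2 h2 he
    have hm1 := hsub u1 (by simpa using h1)
    have hm2 := hsub u2 (by simpa using h2)
    have hi1 := hidx u1 hm1
    have hi2 := hidx u2 hm2
    have : l.idxOf u1 = l.idxOf u2 := by simp only [hg] at he; omega
    rw [← hget u1 hm1, ← hget u2 hm2]
    congr 1
    exact Fin.ext this
  have := Finset.card_le_card_of_injOn g hgK hginj
  omega
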